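/- Fix n ≥ 1, τ_x > 0, τ_y > 0, and set γ = τ_x/(τ_x+τ_y). Let G be an n×n real matrix with nonnegative entries, zero diagonal, and row sums d_i^out = Σ_{j≠i} G i j < 1, let c = (I − γ·G)⁻¹ 𝟙, and set b_i = (1−γ)·c_i. Let ε_1, …, ε_n, ε_0 be jointly independent square-integrable real random variables with mean zero, Var(ε_i) = 1/τ_x for 1 ≤ i ≤ n and Var(ε_0) = 1/τ_y, and define X_i = (1−b_i)·ε_i + b_i·ε_0. Define ΔU_i = E[−(1−d_i^out)·X_i² − Σ_{j≠i} G i j·(X_i − X_j)²] + τ_x⁻¹(1 + d_i^out). Then for each agent i: ΔU_i < 0 if and only if c_i² < Σ_{j≠i} G i j · c_j·(c_j − 2). -/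

import Mathlib

open Matrix Finset MeasureTheory ProbabilityTheory
open scoped NNReal

attribute [local instance] Matrix.linftyOpNormedAddCommGroup Matrix.linftyOpNormedRing
  Matrix.linftyOpNormedAlgebra

section helpers
variable {Ω : Type*} [MeasurableSpace Ω] {μ : Measure Ω} [IsProbabilityMeasure μ]

lemma myIntSq {f : Ω → ℝ} (hf : MemLp f 2 μ) (h0 : ∫ ω, f ω ∂μ = 0) :
    ∫ ω, f ω ^ 2 ∂μ = variance f μ := by
  rw [variance_eq_sub hf]
  simp [Pi.pow_apply, h0]

lemma myCross {f g : Ω → ℝ} (hind : IndepFun f g μ) (hf : Integrable f μ)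
    (hg : Integrable g μ) (h0 : ∫ ω, f ω ∂μ = 0) :
    ∫ ω, f ω * g ω ∂μ = 0 := by
  have := hind.integral_fun_mul_eq_mul_integral hf.1 hg.1
  simpa [Pi.mul_apply, h0] using this

lemma myTwo {f g : Ω → ℝ} (hf : MemLp f 2 μ) (hg : MemLp g 2 μ)
    (hf0 : ∫ ω, f ω ∂μ = 0) (hg0 : ∫ ω, g ω ∂μ = 0)
    (hfg : IndepFun f g μ) (a b : ℝ) :
    ∫ ω, (a * f ω + b * g ω) ^ 2 ∂μ
      = a ^ 2 * variance f μ + b ^ 2 * variance g μ := by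
  have If : Integrable f μ := hf.integrable one_le_two
  have Ig : Integrable g μ := hg.integrable one_le_two
  have J1 : Integrable (fun ω => a ^ 2 * f ω ^ 2) μ := hf.integrable_sq.const_mul _
  have J2 : Integrable (fun ω => b ^ 2 * g ω ^ 2) μ := hg.integrable_sq.const_mul _
  have J3 : Integrable (fun ω => (2 * a * b) * (f ω * g ω)) μ :=
    (hfg.integrable_mul If Ig).const_mul _
  have key : ∫ ω, (a * f ω + b * g ω) ^ 2 ∂μ
      = ∫ ω, (a ^ 2 * f ω ^ 2 + (b ^ 2 * g ω ^ 2 + (2 * a * b) * (f ω * g ω))) ∂μ :=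
    integral_congr_ae (Filter.Eventually.of_forall fun ω => by ring)
  have J23 : Integrable (fun ω => b ^ 2 * g ω ^ 2 + (2 * a * b) * (f ω * g ω)) μ := J2.add J3
  rw [key, integral_add J1 J23, integral_add J2 J3,
    integral_const_mul, integral_const_mul, integral_const_mul,
    myIntSq hf hf0, myIntSq hg hg0, myCross hfg If Ig hf0]
  ring

lemma myThree {f g h : Ω → ℝ} (hf : MemLp f 2 μ) (hg : MemLp g 2 μ) (hh : MemLp h 2 μ)
    (hf0 : ∫ ω, f ω ∂μ = 0) (hg0 : ∫ ω, g ω ∂μ = 0) (hh0 : ∫ ω, h ω ∂μ = 0)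
    (hfg : IndepFun f g μ) (hfh : IndepFun f h μ) (hgh : IndepFun g h μ) (a b c : ℝ) :
    ∫ ω, (a * f ω + b * g ω + c * h ω) ^ 2 ∂μ
      = a ^ 2 * variance f μ + b ^ 2 * variance g μ + c ^ 2 * variance h μ := by
  have If : Integrable f μ := hf.integrable one_le_two
  have Ig : Integrable g μ := hg.integrable one_le_two
  have Ih : Integrable h μ := hh.integrable one_le_two
  have J1 : Integrable (fun ω => a ^ 2 * f ω ^ 2) μ := hf.integrable_sq.const_mul _
  have J2 : Integrable (fun ω => b ^ 2 * g ω ^ 2) μ := hg.integrable_sq.const_mul _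
  have J3 : Integrable (fun ω => c ^ 2 * h ω ^ 2) μ := hh.integrable_sq.const_mul _
  have J4 : Integrable (fun ω => (2 * a * b) * (f ω * g ω)) μ :=
    (hfg.integrable_mul If Ig).const_mul _
  have J5 : Integrable (fun ω => (2 * a * c) * (f ω * h ω)) μ :=
    (hfh.integrable_mul If Ih).const_mul _
  have J6 : Integrable (fun ω => (2 * b * c) * (g ω * h ω)) μ :=
    (hgh.integrable_mul Ig Ih).const_mul _
  have key : ∫ ω, (a * f ω + b * g ω + c * h ω) ^ 2 ∂μ
      = ∫ ω, (a ^ 2 * f ω ^ 2 + (b ^ 2 * g ω ^ 2 + (c ^ 2 * h ω ^ 2 +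
          ((2 * a * b) * (f ω * g ω) + ((2 * a * c) * (f ω * h ω)
            + (2 * b * c) * (g ω * h ω)))))) ∂μ :=
    integral_congr_ae (Filter.Eventually.of_forall fun ω => by ring)
  have J56 : Integrable (fun ω => (2 * a * c) * (f ω * h ω) + (2 * b * c) * (g ω * h ω)) μ :=
    J5.add J6
  have J46 : Integrable (fun ω => (2 * a * b) * (f ω * g ω)
      + ((2 * a * c) * (f ω * h ω) + (2 * b * c) * (g ω * h ω))) μ := J4.add J56
  have J36 : Integrable (fun ω => c ^ 2 * h ω ^ 2 + ((2 * a * b) * (f ω * g ω)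
      + ((2 * a * c) * (f ω * h ω) + (2 * b * c) * (g ω * h ω)))) μ := J3.add J46
  have J26 : Integrable (fun ω => b ^ 2 * g ω ^ 2 + (c ^ 2 * h ω ^ 2 + ((2 * a * b) * (f ω * g ω)
      + ((2 * a * c) * (f ω * h ω) + (2 * b * c) * (g ω * h ω))))) μ := J2.add J36
  rw [key, integral_add J1 J26, integral_add J2 J36, integral_add J3 J46,
    integral_add J4 J56, integral_add J5 J6,
    integral_const_mul, integral_const_mul, integral_const_mul, integral_const_mul,
    integral_const_mul, integral_const_mul,
    myIntSq hf hf0, myIntSq hg hg0, myIntSq hh hh0,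
    myCross hfg If Ig hf0, myCross hfh If Ih hf0, myCross hgh Ig Ih hg0]
  ring

end helpers

/-- Public information provision lowers agent `i`'s equilibrium payoff
(`ΔU_i < 0`) if and only if `c_i² < Σ_{j≠i} g_ij c_j (c_j - 2)`. -/
theorem stmt5 (n : ℕ) (hn : 1 ≤ n) (τx τy : ℝ) (hτx : 0 < τx) (hτy : 0 < τy)
    (γ : ℝ) (hγ : γ = τx / (τx + τy))
    (G : Matrix (Fin n) (Fin n) ℝ)
    (hposG : ∀ i j, 0 ≤ G i j) (hdiag : ∀ i, G i i = 0)
    (hrow : ∀ i, ∑ j ∈ Finset.univ.erase i, G i j < 1)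
    (c : Fin n → ℝ) (hc : c = (1 - γ • G)⁻¹ *ᵥ fun _ => 1)
    (b : Fin n → ℝ) (hb : ∀ i, b i = (1 - γ) * c i)
    {Ω : Type*} [MeasurableSpace Ω] (μ : Measure Ω) [IsProbabilityMeasure μ]
    (ε : Option (Fin n) → Ω → ℝ)
    (hindep : iIndepFun ε μ)
    (hL2 : ∀ k, MemLp (ε k) 2 μ)
    (hmean : ∀ k, ∫ ω, ε k ω ∂μ = 0)
    (hvarx : ∀ i : Fin n, variance (ε (some i)) μ = 1 / τx)
    (hvary : variance (ε none) μ = 1 / τy)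
    (X : Fin n → Ω → ℝ)
    (hX : ∀ i ω, X i ω = (1 - b i) * ε (some i) ω + b i * ε none ω)
    (ΔU : Fin n → ℝ)
    (hΔU : ∀ i, ΔU i = (∫ ω, (-(1 - ∑ j ∈ Finset.univ.erase i, G i j) * (X i ω) ^ 2
          - ∑ j ∈ Finset.univ.erase i, G i j * (X i ω - X j ω) ^ 2) ∂μ)
        + τx⁻¹ * (1 + ∑ j ∈ Finset.univ.erase i, G i j)) :
    ∀ i, ΔU i < 0 ↔
      (c i) ^ 2 < ∑ j ∈ Finset.univ.erase i, G i j * (c j * (c j - 2)) := by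
  -- basic scalar facts
  have hτs : 0 < τx + τy := by linarith
  have hγpos : 0 < γ := by rw [hγ]; positivity
  have hγlt : γ < 1 := by rw [hγ, div_lt_one hτs]; linarith
  have hγne : γ ≠ 0 := ne_of_gt hγpos
  have hu : 0 < 1 - γ := by linarith
  -- the Katz-Bonacich equation
  have hkey : ∀ i, c i - γ * ∑ j, G i j * c j = 1 := by
    haveI : CompleteSpace (Matrix (Fin n) (Fin n) ℝ) := FiniteDimensional.complete ℝ _
    have hnorm : ‖γ • G‖ < 1 := by
      rw [Matrix.linfty_opNorm_def]
      rw [show (1:ℝ) = ((1:ℝ≥0):ℝ) by norm_num, NNReal.coe_lt_coe]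
      refine (Finset.sup_lt_iff (by norm_num : (⊥:ℝ≥0) < 1)).mpr fun i _ => ?_
      rw [← NNReal.coe_lt_coe, NNReal.coe_sum, NNReal.coe_one]
      have h1 : ∀ j, ((‖(γ • G) i j‖₊ : ℝ)) = γ * G i j := by
        intro j
        rw [coe_nnnorm, Matrix.smul_apply, smul_eq_mul, Real.norm_eq_abs,
          abs_of_nonneg (mul_nonneg hγpos.le (hposG i j))]
      rw [Finset.sum_congr rfl fun j _ => h1 j, ← Finset.mul_sum]
      have h2 : ∑ j, G i j = ∑ j ∈ Finset.univ.erase i, G i j :=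
        (Finset.sum_erase _ (hdiag i)).symm
      have h3 : 0 ≤ ∑ j ∈ Finset.univ.erase i, G i j :=
        Finset.sum_nonneg fun j _ => hposG i j
      nlinarith [hrow i]
    have hunit : IsUnit (1 - γ • G) := isUnit_one_sub_of_norm_lt_one hnorm
    have hdet : IsUnit (1 - γ • G).det := (Matrix.isUnit_iff_isUnit_det _).mp hunit
    have heq : (1 - γ • G) *ᵥ c = fun _ => 1 := by
      rw [hc, Matrix.mulVec_mulVec, Matrix.mul_nonsing_inv _ hdet, Matrix.one_mulVec]
    rw [Matrix.sub_mulVec, Matrix.one_mulVec, Matrix.smul_mulVec] at heq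
    intro i
    have h := congrFun heq i
    simpa [Matrix.mulVec, dotProduct, Finset.mul_sum] using h
  -- L² membership of the X's
  have hXL2 : ∀ k, MemLp (X k) 2 μ := by
    intro k
    have : X k = fun ω => (1 - b k) * ε (some k) ω + b k * ε none ω := funext (hX k)
    rw [this]
    exact ((hL2 _).const_mul _).add ((hL2 _).const_mul _)
  -- second moments
  have E2 : ∀ i, ∫ ω, (X i ω) ^ 2 ∂μ
      = (1 - b i) ^ 2 * (1 / τx) + (b i) ^ 2 * (1 / τy) := by
    intro i
    simp only [hX]
    rw [myTwo (hL2 _) (hL2 _) (hmean _) (hmean _)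
      (hindep.indepFun (by simp)) (1 - b i) (b i), hvarx i, hvary]
  have E3 : ∀ i j, j ≠ i → ∫ ω, (X i ω - X j ω) ^ 2 ∂μ
      = (1 - b i) ^ 2 * (1 / τx) + (1 - b j) ^ 2 * (1 / τx)
        + (b i - b j) ^ 2 * (1 / τy) := by
    intro i j hij
    simp only [hX]
    have hpt : ∀ ω, ((1 - b i) * ε (some i) ω + b i * ε none ω
          - ((1 - b j) * ε (some j) ω + b j * ε none ω)) ^ 2
        = ((1 - b i) * ε (some i) ω + (-(1 - b j)) * ε (some j) ω
            + (b i - b j) * ε none ω) ^ 2 := fun ω => by ring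
    rw [integral_congr_ae (Filter.Eventually.of_forall hpt),
      myThree (hL2 _) (hL2 _) (hL2 _) (hmean _) (hmean _) (hmean _)
        (hindep.indepFun (by simpa using fun h => hij (h.symm)))
        (hindep.indepFun (by simp)) (hindep.indepFun (by simp)),
      hvarx i, hvarx j, hvary]
    ring
  intro i
  set d := ∑ j ∈ Finset.univ.erase i, G i j with hd
  set S1 := ∑ j ∈ Finset.univ.erase i, G i j * c j with hS1def
  set S2 := ∑ j ∈ Finset.univ.erase i, G i j * (c j) ^ 2 with hS2def
  have hS1 : γ * S1 = c i - 1 := by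
    have h0 : S1 = ∑ j, G i j * c j := by
      rw [hS1def]
      exact Finset.sum_erase _ (by rw [hdiag i]; ring)
    have := hkey i
    rw [← h0] at this
    linarith
  -- value of ΔU i
  have I1 : Integrable (fun ω => (X i ω) ^ 2) μ := (hXL2 i).integrable_sq
  have I2 : ∀ j, Integrable (fun ω => (X i ω - X j ω) ^ 2) μ := fun j =>
    ((hXL2 i).sub (hXL2 j)).integrable_sq
  have Isum : Integrable (fun ω => ∑ j ∈ Finset.univ.erase i,
      G i j * (X i ω - X j ω) ^ 2) μ :=
    integrable_finset_sum _ fun j _ => (I2 j).const_mul _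
  have hval : ΔU i = -(1 - d) * ((1 - b i) ^ 2 * (1 / τx) + (b i) ^ 2 * (1 / τy))
      - (∑ j ∈ Finset.univ.erase i, G i j * ((1 - b i) ^ 2 * (1 / τx)
          + (1 - b j) ^ 2 * (1 / τx) + (b i - b j) ^ 2 * (1 / τy)))
      + τx⁻¹ * (1 + d) := by
    have hEsum : ∑ j ∈ Finset.univ.erase i, G i j * ∫ ω, (X i ω - X j ω) ^ 2 ∂μ
        = ∑ j ∈ Finset.univ.erase i, G i j * ((1 - b i) ^ 2 * (1 / τx)
            + (1 - b j) ^ 2 * (1 / τx) + (b i - b j) ^ 2 * (1 / τy)) :=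
      Finset.sum_congr rfl fun j hj => by rw [E3 i j (Finset.ne_of_mem_erase hj)]
    rw [hΔU i, integral_sub (I1.const_mul _) Isum, integral_const_mul,
      integral_finset_sum _ fun j _ => (I2 j).const_mul _]
    simp_rw [integral_const_mul]
    rw [E2 i, hEsum]
  -- expand the sum in terms of d, S1, S2
  have hsum3 : (∑ j ∈ Finset.univ.erase i, G i j * ((1 - b i) ^ 2 * (1 / τx)
        + (1 - b j) ^ 2 * (1 / τx) + (b i - b j) ^ 2 * (1 / τy)))
      = ((1 - b i) ^ 2 * (1 / τx) + 1 / τx + (b i) ^ 2 * (1 / τy)) * d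
        + ((-2 * (1 - γ)) * (1 / τx) + (-2 * (b i) * (1 - γ)) * (1 / τy)) * S1
        + ((1 - γ) ^ 2 * (1 / τx) + (1 - γ) ^ 2 * (1 / τy)) * S2 := by
    have hterm : ∀ j ∈ Finset.univ.erase i, G i j * ((1 - b i) ^ 2 * (1 / τx)
          + (1 - b j) ^ 2 * (1 / τx) + (b i - b j) ^ 2 * (1 / τy))
        = ((1 - b i) ^ 2 * (1 / τx) + 1 / τx + (b i) ^ 2 * (1 / τy)) * G i j
          + (((-2 * (1 - γ)) * (1 / τx) + (-2 * (b i) * (1 - γ)) * (1 / τy)) * (G i j * c j)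
            + ((1 - γ) ^ 2 * (1 / τx) + (1 - γ) ^ 2 * (1 / τy)) * (G i j * (c j) ^ 2)) := by
      intro j _
      rw [hb j]
      ring
    rw [Finset.sum_congr rfl hterm, Finset.sum_add_distrib, ← Finset.mul_sum,
      Finset.sum_add_distrib, ← Finset.mul_sum, ← Finset.mul_sum]
    ring
  -- closed form for ΔU i
  have hτyv : τy = τx * (1 - γ) / γ := by
    rw [hγ]
    field_simp
    ring
  have hS1v : S1 = (c i - 1) / γ := by
    rw [eq_div_iff hγne]
    linarith [hS1]
  have hd0 : 0 ≤ d := Finset.sum_nonneg fun j _ => hposG i j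
  have hfinal : ΔU i = ((1 - γ) / τx) * ((c i) ^ 2 + 2 * S1 - S2) := by
    have hτxne : τx ≠ 0 := ne_of_gt hτx
    have hune1 : (1:ℝ) - γ ≠ 0 := ne_of_gt hu
    rw [hval, hsum3, hb i, hS1v, hτyv]
    field_simp
    ring
  have hrhs : ∑ j ∈ Finset.univ.erase i, G i j * (c j * (c j - 2)) = S2 - 2 * S1 := by
    rw [hS2def, hS1def, Finset.mul_sum, ← Finset.sum_sub_distrib]
    exact Finset.sum_congr rfl fun j _ => by ring
  rw [hfinal, hrhs]
  have hk : 0 < (1 - γ) / τx := by positivity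
  constructor
  · intro h
    have ht : c i ^ 2 + 2 * S1 - S2 < 0 := by
      by_contra h'
      push_neg at h'
      exact absurd h (not_lt.mpr (mul_nonneg hk.le h'))
    linarith
  · intro h
    have ht : c i ^ 2 + 2 * S1 - S2 < 0 := by linarith
    exact mul_neg_of_pos_of_neg hk ht
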